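/- Let G = (V,E) be a tree, L a set of links, and for S ⊆ V let δ_G(S) be the set of tree edges with exactly one endpoint in S. For a link ℓ, let P_ℓ be the edge set of the tree path between its endpoints. If x ∈ ℤ^L_{≥0} satisfies x(cov(e)) ≥ 1 for every e ∈ E (where cov(e) = {ℓ : e ∈ P_ℓ}) and |δ_G(S)| is odd, then Σ_{ℓ∈L} ⌈|P_ℓ ∩ δ_G(S)|/2⌉ · x_ℓ ≥ (|δ_G(S)| + 1)/2. -/
import Mathlib


open SimpleGraph

/-- Edge set of the unique path between `u` and `v` in a tree. -/
noncomputable def pathEdges {V : Type*} (G : SimpleGraph V) (hG : G.IsTree) (u v : V) :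
    Set (Sym2 V) := {e | e ∈ ((hG.existsUnique_path u v).exists).choose.edges}

/-- `δ_G(S)`: the tree edges with exactly one endpoint in `S`. -/
def cutEdges {V : Type*} (G : SimpleGraph V) (S : Set V) : Set (Sym2 V) :=
  {e | e ∈ G.edgeSet ∧ ∃ a b, e = s(a, b) ∧ a ∈ S ∧ b ∉ S}

open Classical in
/-- Validity of the odd-cut `{0,1/2}`-Chvátal–Gomory constraints for integer solutions
of the cut LP. -/
theorem stmt2 {V : Type*} [Fintype V] (G : SimpleGraph V) (hG : G.IsTree)
    {L : Type*} [Fintype L] (ep : L → V × V) (x : L → ℤ) (hx : ∀ ℓ, 0 ≤ x ℓ)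
    (hcov : ∀ e ∈ G.edgeSet,
      1 ≤ ∑ ℓ, if e ∈ pathEdges G hG (ep ℓ).1 (ep ℓ).2 then x ℓ else 0)
    (S : Set V) (hodd : Odd (cutEdges G S).ncard) :
    ((cutEdges G S).ncard + 1 : ℚ) / 2 ≤
      ∑ ℓ, (⌈((pathEdges G hG (ep ℓ).1 (ep ℓ).2 ∩ cutEdges G S).ncard : ℚ) / 2⌉ : ℚ)
        * (x ℓ : ℚ) := by
  classical
  set T : Set (Sym2 V) := cutEdges G S with hT
  have hTfin : T.Finite := Set.toFinite T
  set P : L → Set (Sym2 V) := fun ℓ => pathEdges G hG (ep ℓ).1 (ep ℓ).2 with hP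
  set c : L → ℤ := fun ℓ => ((P ℓ ∩ T).ncard : ℤ) with hc
  set N : ℤ := ∑ ℓ, ⌈((P ℓ ∩ T).ncard : ℚ) / 2⌉ * x ℓ with hN
  have h1 : (T.ncard : ℤ) ≤ ∑ ℓ, c ℓ * x ℓ := by
    calc (T.ncard : ℤ) = ∑ _e ∈ hTfin.toFinset, (1 : ℤ) := by
          rw [Finset.sum_const, Set.ncard_eq_toFinset_card T hTfin]
          simp
      _ ≤ ∑ e ∈ hTfin.toFinset, ∑ ℓ, (if e ∈ P ℓ then x ℓ else 0) := by
          refine Finset.sum_le_sum fun e he => ?_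
          exact hcov e ((hTfin.mem_toFinset.mp he).1)
      _ = ∑ ℓ, ∑ e ∈ hTfin.toFinset, (if e ∈ P ℓ then x ℓ else 0) := Finset.sum_comm
      _ = ∑ ℓ, c ℓ * x ℓ := by
          refine Finset.sum_congr rfl fun ℓ _ => ?_
          have hfin : (P ℓ ∩ T).Finite := hTfin.inter_of_right _
          have hflt : hTfin.toFinset.filter (· ∈ P ℓ) = hfin.toFinset := by
            ext e
            simp only [Finset.mem_filter, Set.Finite.mem_toFinset, Set.mem_inter_iff]
            tauto
          rw [← Finset.sum_filter, hflt, Finset.sum_const, nsmul_eq_mul]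
          simp [hc, Set.ncard_eq_toFinset_card _ hfin]
  have h2 : ∑ ℓ, c ℓ * x ℓ ≤ 2 * N := by
    rw [hN, Finset.mul_sum]
    refine Finset.sum_le_sum fun ℓ _ => ?_
    have hce : c ℓ ≤ 2 * ⌈((P ℓ ∩ T).ncard : ℚ) / 2⌉ := by
      have := Int.le_ceil (((P ℓ ∩ T).ncard : ℚ) / 2)
      have h2' : ((P ℓ ∩ T).ncard : ℚ) ≤ 2 * (⌈((P ℓ ∩ T).ncard : ℚ) / 2⌉ : ℚ) := by
        linarith
      exact_mod_cast h2'
    calc c ℓ * x ℓ ≤ (2 * ⌈((P ℓ ∩ T).ncard : ℚ) / 2⌉) * x ℓ :=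
          mul_le_mul_of_nonneg_right hce (hx ℓ)
      _ = 2 * (⌈((P ℓ ∩ T).ncard : ℚ) / 2⌉ * x ℓ) := by ring
  have h3 : (T.ncard : ℤ) + 1 ≤ 2 * N := by
    obtain ⟨k, hk⟩ := hodd
    have h12 : (T.ncard : ℤ) ≤ 2 * N := le_trans h1 h2
    omega
  have hNQ : ∑ ℓ, (⌈((P ℓ ∩ T).ncard : ℚ) / 2⌉ : ℚ) * (x ℓ : ℚ) = (N : ℚ) := by
    rw [hN]; push_cast; ring
  rw [hNQ, div_le_iff₀ (by norm_num : (0:ℚ) < 2)]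
  have : ((T.ncard : ℤ) : ℚ) + 1 ≤ ((2 * N : ℤ) : ℚ) := by exact_mod_cast h3
  push_cast at this ⊢
  linarith
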